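/- Let p be a prime number. There exists a subgroup of (Z/pZ)^2 of order p that is invariant under the automorphism φ₆ defined by φ₆(a,b) = (-b, a+b) if and only if p = 3, or p > 3 and 3 divides p - 1. -/

import Mathlib

lemma phi6_root_three : (-1 : ZMod 3) * -1 - -1 + 1 = 0 := by decide

section Aux

variable (p : ℕ) [Fact p.Prime]

/-- If `c² - c + 1 = 0` has a root, the invariant subgroup exists. -/
lemma phi6_aux_mpr {c : ZMod p} (hc : c * c - c + 1 = 0) :
    ∃ H : AddSubgroup (ZMod p × ZMod p), Nat.card H = p ∧
      ∀ x : ZMod p × ZMod p, x ∈ H ↔ ((-x.2, x.1 + x.2) : ZMod p × ZMod p) ∈ H := by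
  have hc0 : c ≠ 0 := by
    intro h; rw [h] at hc; simp at hc
  -- the homomorphism (a, b) ↦ c*a + b
  let f : ZMod p × ZMod p →+ ZMod p :=
    { toFun := fun x => c * x.1 + x.2
      map_zero' := by simp
      map_add' := by intro x y; simp; ring }
  refine ⟨f.ker, ?_, ?_⟩
  · -- cardinality
    have hsurj : Function.Surjective f := by
      intro y; exact ⟨(0, y), by simp [f]⟩
    have h1 : Nat.card (ZMod p × ZMod p) = Nat.card (ZMod p) * Nat.card f.ker := by
      rw [AddSubgroup.card_eq_card_quotient_mul_card_addSubgroup (s := f.ker),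
        Nat.card_congr (QuotientAddGroup.quotientKerEquivOfSurjective f hsurj).toEquiv]
    have hp2 : Nat.card (ZMod p × ZMod p) = p * p := by
      simp [Nat.card_eq_fintype_card, ZMod.card]
    have hzp : Nat.card (ZMod p) = p := by simp [Nat.card_eq_fintype_card, ZMod.card]
    rw [hzp, hp2] at h1
    exact (Nat.eq_of_mul_eq_mul_left (Fact.out (p := p.Prime)).pos h1.symm)
  · intro x
    obtain ⟨a, b⟩ := x
    simp only [AddMonoidHom.mem_ker]
    show c * a + b = 0 ↔ c * (-b) + (a + b) = 0
    have key : c * (c * (-b) + (a + b)) = c * a + b := by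
      have : c * c = c - 1 := by linear_combination hc
      linear_combination (-b) * this
    constructor
    · intro h
      have := mul_eq_zero.mp (key.trans h)
      tauto
    · intro h
      rw [← key, h, mul_zero]

/-- From a root of `c² - c + 1` we get the arithmetic conclusion. -/
lemma phi6_aux_arith {c : ZMod p} (hc : c * c - c + 1 = 0) :
    p = 3 ∨ (3 < p ∧ 3 ∣ p - 1) := by
  have hp := Fact.out (p := p.Prime)
  by_cases hcm : c = -1
  · left
    rw [hcm] at hc
    have h3 : ((3 : ℕ) : ZMod p) = 0 := by push_cast; linear_combination hc
    have := (ZMod.natCast_eq_zero_iff 3 p).mp h3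
    exact ((Nat.prime_dvd_prime_iff_eq hp (by norm_num)).mp this)
  · right
    have hc3 : c * c * c = -1 := by linear_combination (c + 1) * hc
    have hc6 : (c * c) ^ 3 = 1 := by linear_combination (c * c * c - 1) * hc3
    have hu' : (c * c) * ((c * c) ^ 2) = 1 := by linear_combination hc6
    have hu : IsUnit (c * c) := IsUnit.of_mul_eq_one _ hu'
    have hu3 : hu.unit ^ 3 = 1 := by
      ext
      push_cast
      rw [IsUnit.unit_spec]
      exact hc6
    have hu1 : hu.unit ≠ 1 := by
      intro h
      have hval : c * c = 1 := by
        have := congrArg Units.val h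
        rwa [IsUnit.unit_spec] at this
      have hfac : (c - 1) * (c + 1) = 0 := by linear_combination hval
      rcases mul_eq_zero.mp hfac with h1 | h1
      · have : c = 1 := by linear_combination h1
        rw [this] at hc; simp at hc
      · exact hcm (by linear_combination h1)
    haveI : Fact (Nat.Prime 3) := ⟨by norm_num⟩
    have horder : orderOf hu.unit = 3 := orderOf_eq_prime hu3 hu1
    have hdvd : 3 ∣ Nat.card (ZMod p)ˣ := horder ▸ orderOf_dvd_natCard hu.unit
    have hcard : Nat.card (ZMod p)ˣ = p - 1 := by
      rw [Nat.card_eq_fintype_card, ZMod.card_units_eq_totient, Nat.totient_prime hp]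
    rw [hcard] at hdvd
    have hp2 := hp.two_le
    have hge : 3 ≤ p - 1 := Nat.le_of_dvd (by omega) hdvd
    exact ⟨by omega, hdvd⟩

/-- The arithmetic condition gives a root of `c² - c + 1`. -/
lemma phi6_aux_root (h : p = 3 ∨ (3 < p ∧ 3 ∣ p - 1)) :
    ∃ c : ZMod p, c * c - c + 1 = 0 := by
  rcases h with h | ⟨hgt, hdvd⟩
  · subst h
    exact ⟨-1, phi6_root_three⟩
  · have hdvd3 : 3 ∣ Fintype.card (ZMod p)ˣ := by
      rwa [ZMod.card_units_eq_totient, Nat.totient_prime (Fact.out (p := p.Prime))]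
    haveI : Fact (Nat.Prime 3) := ⟨by norm_num⟩
    obtain ⟨g, hg⟩ := exists_prime_orderOf_dvd_card 3 hdvd3
    have hg3 : (g : ZMod p) ^ 3 = 1 := by
      have h1 : g ^ 3 = 1 := by rw [← hg]; exact pow_orderOf_eq_one g
      have h2 := congrArg Units.val h1
      rwa [Units.val_pow_eq_pow_val, Units.val_one] at h2
    have hg1 : (g : ZMod p) ≠ 1 := by
      intro h
      have : g = 1 := Units.ext h
      rw [this, orderOf_one] at hg; omega
    set z : ZMod p := (g : ZMod p)
    refine ⟨-z, ?_⟩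
    have hfac : (z - 1) * (z * z + z + 1) = 0 := by
      have : z ^ 3 = 1 := hg3
      linear_combination this
    have h2 : z * z + z + 1 = 0 := by
      rcases mul_eq_zero.mp hfac with h1 | h1
      · exact absurd (by linear_combination h1) hg1
      · exact h1
    linear_combination h2

/-- An invariant subgroup of order `p` yields a root of `c² - c + 1`. -/
lemma phi6_aux_mp {H : AddSubgroup (ZMod p × ZMod p)} (hcard : Nat.card H = p)
    (hinv : ∀ x : ZMod p × ZMod p, x ∈ H ↔ ((-x.2, x.1 + x.2) : ZMod p × ZMod p) ∈ H) :
    ∃ c : ZMod p, c * c - c + 1 = 0 := by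
  have hp := Fact.out (p := p.Prime)
  -- get a nonzero element of H
  have hne : ∃ x ∈ H, x ≠ (0 : ZMod p × ZMod p) := by
    by_contra hcon
    push_neg at hcon
    have hbot : H = ⊥ := by
      rw [AddSubgroup.eq_bot_iff_forall]
      exact hcon
    rw [hbot, AddSubgroup.card_bot] at hcard
    have := hp.two_le
    omega
  obtain ⟨x, hxH, hx0⟩ := hne
  -- x has order p, so zmultiples x = H
  have hord : addOrderOf x = p := by
    have h1 : addOrderOf (⟨x, hxH⟩ : H) ∣ Nat.card H := addOrderOf_dvd_natCard _
    rw [hcard, AddSubgroup.addOrderOf_mk] at h1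
    rcases (Nat.Prime.eq_one_or_self_of_dvd hp _ h1) with h | h
    · exfalso
      exact hx0 (AddMonoid.addOrderOf_eq_one_iff.mp h)
    · exact h
  have hle : AddSubgroup.zmultiples x ≤ H := by
    rwa [AddSubgroup.zmultiples_le]
  have hcardz : Nat.card (AddSubgroup.zmultiples x) = p := by
    rw [Nat.card_zmultiples, hord]
  have heq : (AddSubgroup.zmultiples x : Set (ZMod p × ZMod p)) = (H : Set (ZMod p × ZMod p)) := by
    refine Set.eq_of_subset_of_ncard_le hle ?_ (Set.toFinite _)
    rw [← Nat.card_coe_set_eq, ← Nat.card_coe_set_eq]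
    show Nat.card H ≤ Nat.card (AddSubgroup.zmultiples x)
    rw [hcard, hcardz]
  have hHeq : AddSubgroup.zmultiples x = H := SetLike.ext' heq
  -- φ x ∈ H = zmultiples x
  have hphix : ((-x.2, x.1 + x.2) : ZMod p × ZMod p) ∈ AddSubgroup.zmultiples x := by
    rw [hHeq]
    exact (hinv x).mp hxH
  obtain ⟨n, hn⟩ := AddSubgroup.mem_zmultiples_iff.mp hphix
  set c : ZMod p := (n : ZMod p) with hcdef
  have h1 : c * x.1 = -x.2 := by
    have := congrArg Prod.fst hn
    simpa [Prod.smul_fst, zsmul_eq_mul] using this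
  have h2 : c * x.2 = x.1 + x.2 := by
    have := congrArg Prod.snd hn
    simpa [Prod.smul_snd, zsmul_eq_mul] using this
  refine ⟨c, ?_⟩
  have ha : x.1 ≠ 0 := by
    intro h
    apply hx0
    have : x.2 = 0 := by
      have := h1
      rw [h, mul_zero] at this
      have := this.symm
      simpa [neg_eq_zero] using this
    exact Prod.ext h this
  have hkey : x.1 * (c * c - c + 1) = 0 := by
    have hb : x.2 = -(c * x.1) := by linear_combination h1
    rw [hb] at h2
    linear_combination -h2
  rcases mul_eq_zero.mp hkey with h | h
  · exact absurd h ha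
  · exact h

end Aux

/-- Lemma `cyclicinvar`(2) for `d = 6`: for a prime `p`, there exists a subgroup of `(ℤ/pℤ)²`
of order `p` invariant under `φ₆(a,b) = (-b, a+b)` iff `p = 3`, or `p > 3` and `3 ∣ p - 1`. -/
theorem exists_phi6_invariant_subgroup_iff (p : ℕ) (hp : p.Prime) :
    (∃ H : AddSubgroup (ZMod p × ZMod p), Nat.card H = p ∧
      ∀ x : ZMod p × ZMod p, x ∈ H ↔ ((-x.2, x.1 + x.2) : ZMod p × ZMod p) ∈ H) ↔
    (p = 3 ∨ (3 < p ∧ 3 ∣ p - 1)) := by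
  haveI : Fact p.Prime := ⟨hp⟩
  constructor
  · rintro ⟨H, hcard, hinv⟩
    obtain ⟨c, hc⟩ := phi6_aux_mp p hcard hinv
    exact phi6_aux_arith p hc
  · intro h
    obtain ⟨c, hc⟩ := phi6_aux_root p h
    exact phi6_aux_mpr p hc
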